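/- The left Casimirs are in involution: for all 2 ≤ m ≤ m′ ≤ n, {C^[m], C^[m′]} = 0 with respect to the canonical Poisson bracket on ℝ²ⁿ. -/

import Mathlib

open Finset

/-- Canonical Poisson bracket on the phase space ℝ²ⁿ. -/
noncomputable def pb (n : ℕ) (f g : (Fin n → ℝ) → (Fin n → ℝ) → ℝ)
    (x p : Fin n → ℝ) : ℝ :=
  ∑ j, (deriv (fun t => f (Function.update x j t) p) (x j) *
        deriv (fun t => g x (Function.update p j t)) (p j) -
        deriv (fun t => f x (Function.update p j t)) (p j) *
        deriv (fun t => g (Function.update x j t) p) (x j))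

/-- The left Casimir `C^[m]` of the sl(2) coalgebra in the given realisation. -/
noncomputable def CL (n : ℕ) (a : Fin n → ℝ) (m : ℕ)
    (x p : Fin n → ℝ) : ℝ :=
  -(1 / 4) * ((∑ i : Fin n, ∑ j : Fin n, if i < j ∧ (j : ℕ) < m then
      (x i * p j - x j * p i) ^ 2 + a i * (x j) ^ 2 / (x i) ^ 2 +
        a j * (x i) ^ 2 / (x j) ^ 2 else 0)
    + ∑ i : Fin n, if (i : ℕ) < m then a i else 0)

noncomputable def Af (n : ℕ) (a : Fin n → ℝ) (m : ℕ) (x p : Fin n → ℝ) : ℝ :=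
  ∑ i : Fin n, if (i : ℕ) < m then p i ^ 2 + a i / x i ^ 2 else 0

noncomputable def Bf (n : ℕ) (m : ℕ) (x : Fin n → ℝ) : ℝ :=
  ∑ i : Fin n, if (i : ℕ) < m then x i ^ 2 else 0

noncomputable def Df (n : ℕ) (m : ℕ) (x p : Fin n → ℝ) : ℝ :=
  ∑ i : Fin n, if (i : ℕ) < m then x i * p i else 0

lemma sum_update (n : ℕ) (f : Fin n → ℝ) (k : Fin n) (v : ℝ) :
    ∑ i, Function.update f k v i = (∑ i, f i) - f k + v := by
  rw [Finset.sum_update_of_mem (Finset.mem_univ k),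
    Finset.sum_eq_sum_sdiff_singleton_add (Finset.mem_univ k) f]
  ring

lemma CL_eq (n : ℕ) (a : Fin n → ℝ) (m : ℕ) (x p : Fin n → ℝ)
    (hx : ∀ j, x j ≠ 0) :
    CL n a m x p =
      -(1/4) * (Bf n m x * Af n a m x p - Df n m x p ^ 2) := by
  set F : Fin n → Fin n → ℝ := fun i j =>
    if (i : ℕ) < m ∧ (j : ℕ) < m then
      x i ^ 2 * (p j ^ 2 + a j / x j ^ 2) - (x i * p i) * (x j * p j) else 0 with hF
  have h1 : Bf n m x * Af n a m x p - Df n m x p ^ 2 = ∑ i, ∑ j, F i j := by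
    rw [Bf, Af, Df, Finset.sum_mul_sum, sq, Finset.sum_mul_sum,
      ← Finset.sum_sub_distrib]
    refine Finset.sum_congr rfl fun i _ => ?_
    rw [← Finset.sum_sub_distrib]
    refine Finset.sum_congr rfl fun j _ => ?_
    by_cases hi : (i : ℕ) < m <;> by_cases hj : (j : ℕ) < m <;>
      simp [hF, hi, hj]
  have h2 : ∀ i j : Fin n, F i j =
      (if i < j then F i j else 0) + (if i = j then F i j else 0) +
        (if j < i then F i j else 0) := by
    intro i j
    rcases lt_trichotomy i j with h | h | h
    · simp [h, h.ne, h.asymm]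
    · simp [h, lt_irrefl]
    · simp [h, h.ne', h.asymm]
  have h3 : ∑ i, ∑ j, F i j =
      (∑ i, ∑ j, if i < j then F i j + F j i else 0) + ∑ i, F i i := by
    calc ∑ i, ∑ j, F i j
        = (∑ i, ∑ j, if i < j then F i j else 0) +
            (∑ i, ∑ j, if i = j then F i j else 0) +
            (∑ i, ∑ j, if j < i then F i j else 0) := by
          rw [← Finset.sum_add_distrib, ← Finset.sum_add_distrib]
          refine Finset.sum_congr rfl fun i _ => ?_
          rw [← Finset.sum_add_distrib, ← Finset.sum_add_distrib]
          exact Finset.sum_congr rfl fun j _ => h2 i j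
      _ = (∑ i, ∑ j, if i < j then F i j else 0) + (∑ i, F i i) +
            (∑ i, ∑ j, if i < j then F j i else 0) := by
          rw [Finset.sum_comm (f := fun i j => if j < i then F i j else 0)]
          congr 1
          congr 1
          refine Finset.sum_congr rfl fun i _ => ?_
          simp
      _ = _ := by
          have key : (∑ i, ∑ j, if i < j then F i j else 0) +
              (∑ i, ∑ j, if i < j then F j i else 0) =
              ∑ i, ∑ j, if i < j then F i j + F j i else 0 := by
            rw [← Finset.sum_add_distrib]
            refine Finset.sum_congr rfl fun i _ => ?_
            rw [← Finset.sum_add_distrib]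
            refine Finset.sum_congr rfl fun j _ => ?_
            split <;> simp
          linarith
  have h4 : (∑ i, ∑ j, if i < j then F i j + F j i else 0) =
      ∑ i : Fin n, ∑ j : Fin n, if i < j ∧ (j : ℕ) < m then
        (x i * p j - x j * p i) ^ 2 + a i * (x j) ^ 2 / (x i) ^ 2 +
          a j * (x i) ^ 2 / (x j) ^ 2 else 0 := by
    refine Finset.sum_congr rfl fun i _ => Finset.sum_congr rfl fun j _ => ?_
    by_cases hij : i < j
    · by_cases hjm : (j : ℕ) < m
      · have him : (i : ℕ) < m := lt_trans hij hjm
        rw [if_pos hij, if_pos ⟨hij, hjm⟩]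
        simp only [hF, him, hjm, and_self, if_true]
        field_simp [hx i, hx j]
        ring
      · have hc : ¬(i < j ∧ (j : ℕ) < m) := fun h => hjm h.2
        rw [if_pos hij, if_neg hc]
        simp only [hF]
        rw [if_neg (fun h => hjm h.2), if_neg (fun h => hjm h.1)]
        ring
    · simp [hij]
  have h5 : (∑ i, F i i) = ∑ i : Fin n, if (i : ℕ) < m then a i else 0 := by
    refine Finset.sum_congr rfl fun i _ => ?_
    by_cases hi : (i : ℕ) < m
    · simp only [hF, hi, and_self, if_true]
      field_simp [hx i]
      ring
    · simp only [hF, hi, and_self, if_false]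
  rw [CL, h1, h3, h4, h5]

lemma Af_update_x (n : ℕ) (a : Fin n → ℝ) (m : ℕ) (x p : Fin n → ℝ)
    (k : Fin n) (hk : (k : ℕ) < m) (t : ℝ) :
    Af n a m (Function.update x k t) p =
      Af n a m x p - a k / x k ^ 2 + a k / t ^ 2 := by
  have h : (fun i : Fin n =>
      if (i : ℕ) < m then p i ^ 2 + a i / (Function.update x k t i) ^ 2 else 0)
      = Function.update (fun i : Fin n =>
          if (i : ℕ) < m then p i ^ 2 + a i / x i ^ 2 else 0) k
          (p k ^ 2 + a k / t ^ 2) := by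
    funext i
    rcases eq_or_ne i k with rfl | hik
    · simp [hk]
    · simp [Function.update_of_ne hik]
  rw [Af, h, sum_update, ← Af, if_pos hk]
  ring

lemma Bf_update (n : ℕ) (m : ℕ) (x : Fin n → ℝ) (k : Fin n)
    (hk : (k : ℕ) < m) (t : ℝ) :
    Bf n m (Function.update x k t) = Bf n m x - x k ^ 2 + t ^ 2 := by
  have h : (fun i : Fin n => if (i : ℕ) < m then (Function.update x k t i) ^ 2 else 0)
      = Function.update (fun i : Fin n => if (i : ℕ) < m then x i ^ 2 else 0) k (t ^ 2) := by
    funext i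
    rcases eq_or_ne i k with rfl | hik
    · simp [hk]
    · simp [Function.update_of_ne hik]
  rw [Bf, h, sum_update, ← Bf, if_pos hk]

lemma Df_update_x (n : ℕ) (m : ℕ) (x p : Fin n → ℝ) (k : Fin n)
    (hk : (k : ℕ) < m) (t : ℝ) :
    Df n m (Function.update x k t) p = Df n m x p - x k * p k + t * p k := by
  have h : (fun i : Fin n => if (i : ℕ) < m then (Function.update x k t i) * p i else 0)
      = Function.update (fun i : Fin n => if (i : ℕ) < m then x i * p i else 0) k (t * p k) := by
    funext i
    rcases eq_or_ne i k with rfl | hik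
    · simp [hk]
    · simp [Function.update_of_ne hik]
  rw [Df, h, sum_update, ← Df, if_pos hk]

lemma Af_update_p (n : ℕ) (a : Fin n → ℝ) (m : ℕ) (x p : Fin n → ℝ)
    (k : Fin n) (hk : (k : ℕ) < m) (t : ℝ) :
    Af n a m x (Function.update p k t) = Af n a m x p - p k ^ 2 + t ^ 2 := by
  have h : (fun i : Fin n =>
      if (i : ℕ) < m then (Function.update p k t i) ^ 2 + a i / x i ^ 2 else 0)
      = Function.update (fun i : Fin n =>
          if (i : ℕ) < m then p i ^ 2 + a i / x i ^ 2 else 0) k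
          (t ^ 2 + a k / x k ^ 2) := by
    funext i
    rcases eq_or_ne i k with rfl | hik
    · simp [hk]
    · simp [Function.update_of_ne hik]
  rw [Af, h, sum_update, ← Af, if_pos hk]
  ring

lemma Df_update_p (n : ℕ) (m : ℕ) (x p : Fin n → ℝ) (k : Fin n)
    (hk : (k : ℕ) < m) (t : ℝ) :
    Df n m x (Function.update p k t) = Df n m x p - x k * p k + x k * t := by
  have h : (fun i : Fin n => if (i : ℕ) < m then x i * (Function.update p k t i) else 0)
      = Function.update (fun i : Fin n => if (i : ℕ) < m then x i * p i else 0) k (x k * t) := by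
    funext i
    rcases eq_or_ne i k with rfl | hik
    · simp [hk]
    · simp [Function.update_of_ne hik]
  rw [Df, h, sum_update, ← Df, if_pos hk]

lemma CL_update_x_ge (n : ℕ) (a : Fin n → ℝ) (m : ℕ) (x p : Fin n → ℝ)
    (k : Fin n) (hk : m ≤ (k : ℕ)) (t : ℝ) :
    CL n a m (Function.update x k t) p = CL n a m x p := by
  rw [CL, CL]
  have h : (∑ i : Fin n, ∑ j : Fin n, if i < j ∧ (j : ℕ) < m then
      (Function.update x k t i * p j - Function.update x k t j * p i) ^ 2 +
        a i * (Function.update x k t j) ^ 2 / (Function.update x k t i) ^ 2 +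
        a j * (Function.update x k t i) ^ 2 / (Function.update x k t j) ^ 2 else 0)
      = ∑ i : Fin n, ∑ j : Fin n, if i < j ∧ (j : ℕ) < m then
      (x i * p j - x j * p i) ^ 2 + a i * (x j) ^ 2 / (x i) ^ 2 +
        a j * (x i) ^ 2 / (x j) ^ 2 else 0 := by
    refine Finset.sum_congr rfl fun i _ => Finset.sum_congr rfl fun j _ => ?_
    by_cases h : i < j ∧ (j : ℕ) < m
    · have hij : (i : ℕ) < (j : ℕ) := h.1
      have hj : j ≠ k := Fin.ne_of_val_ne (by omega)
      have hi : i ≠ k := Fin.ne_of_val_ne (by omega)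
      rw [if_pos h, if_pos h, Function.update_of_ne hi, Function.update_of_ne hj]
    · rw [if_neg h, if_neg h]
  rw [h]

lemma CL_update_p_ge (n : ℕ) (a : Fin n → ℝ) (m : ℕ) (x p : Fin n → ℝ)
    (k : Fin n) (hk : m ≤ (k : ℕ)) (t : ℝ) :
    CL n a m x (Function.update p k t) = CL n a m x p := by
  rw [CL, CL]
  have h : (∑ i : Fin n, ∑ j : Fin n, if i < j ∧ (j : ℕ) < m then
      (x i * Function.update p k t j - x j * Function.update p k t i) ^ 2 +
        a i * (x j) ^ 2 / (x i) ^ 2 + a j * (x i) ^ 2 / (x j) ^ 2 else 0)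
      = ∑ i : Fin n, ∑ j : Fin n, if i < j ∧ (j : ℕ) < m then
      (x i * p j - x j * p i) ^ 2 + a i * (x j) ^ 2 / (x i) ^ 2 +
        a j * (x i) ^ 2 / (x j) ^ 2 else 0 := by
    refine Finset.sum_congr rfl fun i _ => Finset.sum_congr rfl fun j _ => ?_
    by_cases h : i < j ∧ (j : ℕ) < m
    · have hij : (i : ℕ) < (j : ℕ) := h.1
      have hj : j ≠ k := Fin.ne_of_val_ne (by omega)
      have hi : i ≠ k := Fin.ne_of_val_ne (by omega)
      rw [if_pos h, if_pos h, Function.update_of_ne hi, Function.update_of_ne hj]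
    · rw [if_neg h, if_neg h]
  rw [h]

lemma hasDerivAt_aux_x (cb ca cd ak pk xk : ℝ) (hxk : xk ≠ 0) :
    HasDerivAt (fun t : ℝ => -(1/4) * ((cb + t ^ 2) * (ca + ak / t ^ 2) - (cd + t * pk) ^ 2))
      (-(1/4) * (2 * xk * (ca + ak / xk ^ 2) - (cb + xk ^ 2) * (2 * ak / xk ^ 3)
        - 2 * (cd + xk * pk) * pk)) xk := by
  have h1 : HasDerivAt (fun t : ℝ => cb + t ^ 2) (2 * xk) xk := by
    simpa using (hasDerivAt_pow 2 xk).const_add cb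
  have h2 : HasDerivAt (fun t : ℝ => ca + ak / t ^ 2) (-(2 * ak / xk ^ 3)) xk := by
    have h0 : HasDerivAt (fun t : ℝ => (t ^ 2)⁻¹)
        (-(↑2 * xk ^ (2 - 1)) / (xk ^ 2) ^ 2) xk :=
      (hasDerivAt_pow 2 xk).inv (pow_ne_zero 2 hxk)
    have h0' := (h0.const_mul ak).const_add ca
    refine h0'.congr_deriv ?_
    field_simp
    ring
  have h3 : HasDerivAt (fun t : ℝ => cd + t * pk) pk xk := by
    simpa using ((hasDerivAt_id xk).mul_const pk).const_add cd
  have h4 := ((h1.mul h2).sub (h3.pow 2)).const_mul (-(1/4) : ℝ)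
  refine h4.congr_deriv ?_
  push_cast
  ring

lemma hasDerivAt_aux_p (cb ca cd xk pk : ℝ) :
    HasDerivAt (fun t : ℝ => -(1/4) * (cb * (ca + t ^ 2) - (cd + xk * t) ^ 2))
      (-(1/4) * (cb * (2 * pk) - 2 * (cd + xk * pk) * xk)) pk := by
  have h1 : HasDerivAt (fun t : ℝ => ca + t ^ 2) (2 * pk) pk := by
    simpa using (hasDerivAt_pow 2 pk).const_add ca
  have h3 : HasDerivAt (fun t : ℝ => cd + xk * t) xk pk := by
    simpa using ((hasDerivAt_id pk).const_mul xk).const_add cd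
  have h4 := ((h1.const_mul cb).sub (h3.pow 2)).const_mul (-(1/4) : ℝ)
  refine h4.congr_deriv ?_
  push_cast
  ring

lemma deriv_CL_x (n : ℕ) (a : Fin n → ℝ) (m : ℕ) (x p : Fin n → ℝ)
    (hx : ∀ j, x j ≠ 0) (k : Fin n) (hk : (k : ℕ) < m) :
    deriv (fun t => CL n a m (Function.update x k t) p) (x k) =
      -(1/4) * (2 * x k * Af n a m x p - 2 * a k / x k ^ 3 * Bf n m x
        - 2 * p k * Df n m x p) := by
  have hev : (fun t => CL n a m (Function.update x k t) p) =ᶠ[nhds (x k)]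
      (fun t => -(1/4) * ((Bf n m x - x k ^ 2 + t ^ 2) *
        (Af n a m x p - a k / x k ^ 2 + a k / t ^ 2) -
        (Df n m x p - x k * p k + t * p k) ^ 2)) := by
    filter_upwards [eventually_ne_nhds (hx k)] with t ht
    have hx' : ∀ j, Function.update x k t j ≠ 0 := by
      intro j
      rcases eq_or_ne j k with rfl | h
      · simpa using ht
      · simpa [Function.update_of_ne h] using hx j
    rw [CL_eq n a m _ p hx', Bf_update n m x k hk t, Af_update_x n a m x p k hk t,
      Df_update_x n m x p k hk t]
  rw [hev.deriv_eq,
    (hasDerivAt_aux_x (Bf n m x - x k ^ 2) (Af n a m x p - a k / x k ^ 2)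
      (Df n m x p - x k * p k) (a k) (p k) (x k) (hx k)).deriv]
  field_simp
  ring

lemma deriv_CL_p (n : ℕ) (a : Fin n → ℝ) (m : ℕ) (x p : Fin n → ℝ)
    (hx : ∀ j, x j ≠ 0) (k : Fin n) (hk : (k : ℕ) < m) :
    deriv (fun t => CL n a m x (Function.update p k t)) (p k) =
      -(1/4) * (2 * p k * Bf n m x - 2 * x k * Df n m x p) := by
  have hfe : (fun t => CL n a m x (Function.update p k t)) =
      (fun t => -(1/4) * (Bf n m x * (Af n a m x p - p k ^ 2 + t ^ 2) -
        (Df n m x p - x k * p k + x k * t) ^ 2)) := by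
    funext t
    rw [CL_eq n a m x _ hx, Af_update_p n a m x p k hk t, Df_update_p n m x p k hk t]
  rw [hfe,
    (hasDerivAt_aux_p (Bf n m x) (Af n a m x p - p k ^ 2)
      (Df n m x p - x k * p k) (x k) (p k)).deriv]
  ring

lemma deriv_CL_x_ge (n : ℕ) (a : Fin n → ℝ) (m : ℕ) (x p : Fin n → ℝ)
    (k : Fin n) (hk : m ≤ (k : ℕ)) :
    deriv (fun t => CL n a m (Function.update x k t) p) (x k) = 0 := by
  have h : (fun t => CL n a m (Function.update x k t) p) = fun _ => CL n a m x p :=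
    funext fun t => CL_update_x_ge n a m x p k hk t
  rw [h, deriv_const]

lemma deriv_CL_p_ge (n : ℕ) (a : Fin n → ℝ) (m : ℕ) (x p : Fin n → ℝ)
    (k : Fin n) (hk : m ≤ (k : ℕ)) :
    deriv (fun t => CL n a m x (Function.update p k t)) (p k) = 0 := by
  have h : (fun t => CL n a m x (Function.update p k t)) = fun _ => CL n a m x p :=
    funext fun t => CL_update_p_ge n a m x p k hk t
  rw [h, deriv_const]

theorem stmt7 (n : ℕ) (a : Fin n → ℝ) (m m' : ℕ) (hm : 2 ≤ m) (hmm' : m ≤ m')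
    (hm'n : m' ≤ n) (x p : Fin n → ℝ) (hx : ∀ j, x j ≠ 0) :
    pb n (CL n a m) (CL n a m') x p = 0 := by
  set A := Af n a m x p with hA
  set B := Bf n m x with hB
  set D := Df n m x p with hD
  set A' := Af n a m' x p with hA'
  set B' := Bf n m' x with hB'
  set D' := Df n m' x p with hD'
  have hterm : ∀ j : Fin n,
      (deriv (fun t => CL n a m (Function.update x j t) p) (x j) *
        deriv (fun t => CL n a m' x (Function.update p j t)) (p j) -
        deriv (fun t => CL n a m x (Function.update p j t)) (p j) *
        deriv (fun t => CL n a m' (Function.update x j t) p) (x j))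
      = (if (j : ℕ) < m then x j * p j else 0) * ((1/4) * (A * B' - B * A')) +
        (if (j : ℕ) < m then x j ^ 2 else 0) * ((1/4) * (D * A' - A * D')) +
        (if (j : ℕ) < m then p j ^ 2 + a j / x j ^ 2 else 0) *
          ((1/4) * (B * D' - D * B')) := by
    intro j
    by_cases hjm : (j : ℕ) < m
    · have hjm' : (j : ℕ) < m' := lt_of_lt_of_le hjm hmm'
      rw [deriv_CL_x n a m x p hx j hjm, deriv_CL_p n a m' x p hx j hjm',
        deriv_CL_p n a m x p hx j hjm, deriv_CL_x n a m' x p hx j hjm',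
        if_pos hjm, if_pos hjm, if_pos hjm, ← hA, ← hB, ← hD, ← hA', ← hB', ← hD']
      field_simp [hx j]
      ring
    · rw [deriv_CL_x_ge n a m x p j (le_of_not_gt hjm),
        deriv_CL_p_ge n a m x p j (le_of_not_gt hjm),
        if_neg hjm, if_neg hjm, if_neg hjm]
      ring
  rw [pb, Finset.sum_congr rfl fun j _ => hterm j, Finset.sum_add_distrib,
    Finset.sum_add_distrib, ← Finset.sum_mul, ← Finset.sum_mul, ← Finset.sum_mul]
  have h1 : ∑ j : Fin n, (if (j : ℕ) < m then x j * p j else 0) = D := rfl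
  have h2 : ∑ j : Fin n, (if (j : ℕ) < m then x j ^ 2 else 0) = B := rfl
  have h3 : ∑ j : Fin n, (if (j : ℕ) < m then p j ^ 2 + a j / x j ^ 2 else 0) = A := rfl
  rw [h1, h2, h3]
  ring
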